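/- Given positive radii r_i, r_j, r_k and weights Φ_ij, Φ_jk, Φ_ik ∈ [0, π/2], the following symmetry holds: r_j · ∂θ_i^{jk}/∂r_j = r_i · ∂θ_j^{ik}/∂r_i. -/

import Mathlib

open Real

/-- The edge length assigned to edge `{i,j}` by the circle packing metric with
radii `a`, `b` and weight `φ`. -/
noncomputable def ell (a b φ : ℝ) : ℝ := Real.sqrt (a ^ 2 + b ^ 2 + 2 * a * b * Real.cos φ)

/-- The inner angle of a Euclidean triangle at the vertex whose two adjacent sides
have lengths `x`, `y` and whose opposite side has length `z`. -/
noncomputable def innerAngle (x y z : ℝ) : ℝ :=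
  Real.arccos ((x ^ 2 + y ^ 2 - z ^ 2) / (2 * x * y))

private lemma key {p q : ℝ → ℝ} {p' q' x : ℝ} (b : ℝ)
    (hp : HasDerivAt p p' x) (hq : HasDerivAt q q' x)
    (hpx : 0 < p x) (hqx : 0 < q x) (hb : 0 < b)
    (hQ : 0 < 2 * p x * b ^ 2 + 2 * b ^ 2 * q x + 2 * p x * q x - (p x) ^ 2 - b ^ 4 - (q x) ^ 2) :
    HasDerivAt (fun y => innerAngle (Real.sqrt (p y)) b (Real.sqrt (q y)))
      (-(1 / Real.sqrt (2 * p x * b ^ 2 + 2 * b ^ 2 * q x + 2 * p x * q x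
          - (p x) ^ 2 - b ^ 4 - (q x) ^ 2))
        * ((p x - b ^ 2 + q x) * p' / (2 * p x) - q')) x := by
  have hApos : 0 < Real.sqrt (p x) := Real.sqrt_pos.mpr hpx
  have hA2 : Real.sqrt (p x) ^ 2 = p x := Real.sq_sqrt hpx.le
  have hnum : HasDerivAt (fun y => p y + b ^ 2 - q y) (p' - q') x :=
    (hp.add_const (b ^ 2)).sub hq
  have hden : HasDerivAt (fun y => 2 * Real.sqrt (p y) * b)
      (2 * (p' / (2 * Real.sqrt (p x))) * b) x :=
    ((hp.sqrt hpx.ne').const_mul 2).mul_const b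
  have hdne : 2 * Real.sqrt (p x) * b ≠ 0 := by positivity
  have hc : HasDerivAt (fun y => (p y + b ^ 2 - q y) / (2 * Real.sqrt (p y) * b))
      (((p' - q') * (2 * Real.sqrt (p x) * b)
        - (p x + b ^ 2 - q x) * (2 * (p' / (2 * Real.sqrt (p x))) * b))
        / (2 * Real.sqrt (p x) * b) ^ 2) x := hnum.div hden hdne
  have h1c : 1 - ((p x + b ^ 2 - q x) / (2 * Real.sqrt (p x) * b)) ^ 2
      = (2 * p x * b ^ 2 + 2 * b ^ 2 * q x + 2 * p x * q x - (p x) ^ 2 - b ^ 4 - (q x) ^ 2)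
        / (4 * p x * b ^ 2) := by
    rw [div_pow]
    rw [show (2 * Real.sqrt (p x) * b) ^ 2 = 4 * p x * b ^ 2 by rw [mul_pow, mul_pow, hA2]; ring]
    have hne : (4:ℝ) * p x * b ^ 2 ≠ 0 := by positivity
    rw [eq_div_iff hne, sub_mul, div_mul_cancel₀ _ hne]
    ring
  have h1cpos : 0 < 1 - ((p x + b ^ 2 - q x) / (2 * Real.sqrt (p x) * b)) ^ 2 := by
    rw [h1c]; positivity
  have hcne1 : (p x + b ^ 2 - q x) / (2 * Real.sqrt (p x) * b) ≠ 1 := by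
    intro h; rw [h] at h1cpos; norm_num at h1cpos
  have hcnem1 : (p x + b ^ 2 - q x) / (2 * Real.sqrt (p x) * b) ≠ -1 := by
    intro h; rw [h] at h1cpos; norm_num at h1cpos
  have harc := (Real.hasDerivAt_arccos hcnem1 hcne1).comp x hc
  simp only [Function.comp_def] at harc
  have hev : (fun y => Real.arccos ((p y + b ^ 2 - q y) / (2 * Real.sqrt (p y) * b)))
      =ᶠ[nhds x] fun y => innerAngle (Real.sqrt (p y)) b (Real.sqrt (q y)) := by
    have h1 : ∀ᶠ y in nhds x, 0 < p y := hp.continuousAt.eventually (eventually_gt_nhds hpx)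
    have h2 : ∀ᶠ y in nhds x, 0 < q y := hq.continuousAt.eventually (eventually_gt_nhds hqx)
    filter_upwards [h1, h2] with y hy1 hy2
    simp only [innerAngle]
    rw [Real.sq_sqrt hy1.le, Real.sq_sqrt hy2.le]
  have final := harc.congr_of_eventuallyEq hev.symm
  refine HasDerivAt.congr_deriv final ?_
  have hQs : Real.sqrt (1 - ((p x + b ^ 2 - q x) / (2 * Real.sqrt (p x) * b)) ^ 2)
      = Real.sqrt (2 * p x * b ^ 2 + 2 * b ^ 2 * q x + 2 * p x * q x
          - (p x) ^ 2 - b ^ 4 - (q x) ^ 2) / (2 * Real.sqrt (p x) * b) := by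
    rw [h1c, Real.sqrt_div hQ.le]
    rw [show (4 : ℝ) * p x * b ^ 2 = (2 * Real.sqrt (p x) * b) ^ 2 by rw [mul_pow, mul_pow, hA2]; ring]
    rw [Real.sqrt_sq (by positivity)]
  rw [hQs]
  have hSQ : 0 < Real.sqrt (2 * p x * b ^ 2 + 2 * b ^ 2 * q x + 2 * p x * q x
      - (p x) ^ 2 - b ^ 4 - (q x) ^ 2) := Real.sqrt_pos.mpr hQ
  generalize hA : Real.sqrt (p x) = A at hApos hA2 ⊢
  rw [← hA2] at hSQ ⊢
  field_simp
  ring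

private lemma Qpos {s t u A B C : ℝ} (hA : A ^ 2 = s) (hB : B ^ 2 = u) (hC : C ^ 2 = t)
    (h0 : 0 < A + B + C) (h1 : 0 < -A + B + C) (h2 : 0 < A - B + C) (h3 : 0 < A + B - C) :
    0 < 2 * s * u + 2 * u * t + 2 * s * t - s ^ 2 - u ^ 2 - t ^ 2 := by
  subst hA hB hC
  nlinarith [mul_pos (mul_pos (mul_pos h0 h1) h2) h3]

set_option maxHeartbeats 2000000 in
/-- The symmetry `r_j ∂θ_i^{jk}/∂r_j = r_i ∂θ_j^{ik}/∂r_i`. -/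
theorem angle_deriv_symm
    (ri rj rk Φij Φjk Φik : ℝ)
    (hri : 0 < ri) (hrj : 0 < rj) (hrk : 0 < rk)
    (hΦij : Φij ∈ Set.Icc 0 (π / 2)) (hΦjk : Φjk ∈ Set.Icc 0 (π / 2))
    (hΦik : Φik ∈ Set.Icc 0 (π / 2)) :
    rj * deriv (fun x => innerAngle (ell ri x Φij) (ell ri rk Φik) (ell x rk Φjk)) rj =
    ri * deriv (fun x => innerAngle (ell x rj Φij) (ell rj rk Φjk) (ell x rk Φik)) ri := by
  obtain ⟨h1ij, h2ij⟩ := hΦij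
  obtain ⟨h1jk, h2jk⟩ := hΦjk
  obtain ⟨h1ik, h2ik⟩ := hΦik
  have hpi : (0:ℝ) ≤ π / 2 := by positivity
  have cij0 : 0 ≤ Real.cos Φij := Real.cos_nonneg_of_mem_Icc ⟨by linarith, h2ij⟩
  have cjk0 : 0 ≤ Real.cos Φjk := Real.cos_nonneg_of_mem_Icc ⟨by linarith, h2jk⟩
  have cik0 : 0 ≤ Real.cos Φik := Real.cos_nonneg_of_mem_Icc ⟨by linarith, h2ik⟩
  have cij1 : Real.cos Φij ≤ 1 := Real.cos_le_one _
  have cjk1 : Real.cos Φjk ≤ 1 := Real.cos_le_one _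
  have cik1 : Real.cos Φik ≤ 1 := Real.cos_le_one _
  have hS : 0 < ri ^ 2 + rj ^ 2 + 2 * ri * rj * Real.cos Φij := by nlinarith [mul_pos hri hrj]
  have hT : 0 < rj ^ 2 + rk ^ 2 + 2 * rj * rk * Real.cos Φjk := by nlinarith [mul_pos hrj hrk]
  have hU : 0 < ri ^ 2 + rk ^ 2 + 2 * ri * rk * Real.cos Φik := by nlinarith [mul_pos hri hrk]
  have hA2 : Real.sqrt (ri ^ 2 + rj ^ 2 + 2 * ri * rj * Real.cos Φij) ^ 2
      = ri ^ 2 + rj ^ 2 + 2 * ri * rj * Real.cos Φij := Real.sq_sqrt hS.le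
  have hC2 : Real.sqrt (rj ^ 2 + rk ^ 2 + 2 * rj * rk * Real.cos Φjk) ^ 2
      = rj ^ 2 + rk ^ 2 + 2 * rj * rk * Real.cos Φjk := Real.sq_sqrt hT.le
  have hB2 : Real.sqrt (ri ^ 2 + rk ^ 2 + 2 * ri * rk * Real.cos Φik) ^ 2
      = ri ^ 2 + rk ^ 2 + 2 * ri * rk * Real.cos Φik := Real.sq_sqrt hU.le
  have hC4 : Real.sqrt (rj ^ 2 + rk ^ 2 + 2 * rj * rk * Real.cos Φjk) ^ 4
      = (rj ^ 2 + rk ^ 2 + 2 * rj * rk * Real.cos Φjk) ^ 2 := by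
    rw [show (4:ℕ) = 2 * 2 from rfl, pow_mul, hC2]
  have hB4 : Real.sqrt (ri ^ 2 + rk ^ 2 + 2 * ri * rk * Real.cos Φik) ^ 4
      = (ri ^ 2 + rk ^ 2 + 2 * ri * rk * Real.cos Φik) ^ 2 := by
    rw [show (4:ℕ) = 2 * 2 from rfl, pow_mul, hB2]
  -- triangle inequalities on the three lengths
  have hAri : ri < Real.sqrt (ri ^ 2 + rj ^ 2 + 2 * ri * rj * Real.cos Φij) :=
    (Real.lt_sqrt hri.le).mpr (by nlinarith [mul_pos hri hrj])
  have hArj : rj < Real.sqrt (ri ^ 2 + rj ^ 2 + 2 * ri * rj * Real.cos Φij) :=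
    (Real.lt_sqrt hrj.le).mpr (by nlinarith [mul_pos hri hrj])
  have hAub : Real.sqrt (ri ^ 2 + rj ^ 2 + 2 * ri * rj * Real.cos Φij) ≤ ri + rj := by
    have h : ri ^ 2 + rj ^ 2 + 2 * ri * rj * Real.cos Φij ≤ (ri + rj) ^ 2 := by
      nlinarith [mul_pos hri hrj]
    calc Real.sqrt (ri ^ 2 + rj ^ 2 + 2 * ri * rj * Real.cos Φij)
        ≤ Real.sqrt ((ri + rj) ^ 2) := Real.sqrt_le_sqrt h
      _ = ri + rj := Real.sqrt_sq (by positivity)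
  have hCrj : rj < Real.sqrt (rj ^ 2 + rk ^ 2 + 2 * rj * rk * Real.cos Φjk) :=
    (Real.lt_sqrt hrj.le).mpr (by nlinarith [mul_pos hrj hrk])
  have hCrk : rk < Real.sqrt (rj ^ 2 + rk ^ 2 + 2 * rj * rk * Real.cos Φjk) :=
    (Real.lt_sqrt hrk.le).mpr (by nlinarith [mul_pos hrj hrk])
  have hCub : Real.sqrt (rj ^ 2 + rk ^ 2 + 2 * rj * rk * Real.cos Φjk) ≤ rj + rk := by
    have h : rj ^ 2 + rk ^ 2 + 2 * rj * rk * Real.cos Φjk ≤ (rj + rk) ^ 2 := by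
      nlinarith [mul_pos hrj hrk]
    calc Real.sqrt (rj ^ 2 + rk ^ 2 + 2 * rj * rk * Real.cos Φjk)
        ≤ Real.sqrt ((rj + rk) ^ 2) := Real.sqrt_le_sqrt h
      _ = rj + rk := Real.sqrt_sq (by positivity)
  have hBri : ri < Real.sqrt (ri ^ 2 + rk ^ 2 + 2 * ri * rk * Real.cos Φik) :=
    (Real.lt_sqrt hri.le).mpr (by nlinarith [mul_pos hri hrk])
  have hBrk : rk < Real.sqrt (ri ^ 2 + rk ^ 2 + 2 * ri * rk * Real.cos Φik) :=
    (Real.lt_sqrt hrk.le).mpr (by nlinarith [mul_pos hri hrk])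
  have hBub : Real.sqrt (ri ^ 2 + rk ^ 2 + 2 * ri * rk * Real.cos Φik) ≤ ri + rk := by
    have h : ri ^ 2 + rk ^ 2 + 2 * ri * rk * Real.cos Φik ≤ (ri + rk) ^ 2 := by
      nlinarith [mul_pos hri hrk]
    calc Real.sqrt (ri ^ 2 + rk ^ 2 + 2 * ri * rk * Real.cos Φik)
        ≤ Real.sqrt ((ri + rk) ^ 2) := Real.sqrt_le_sqrt h
      _ = ri + rk := Real.sqrt_sq (by positivity)
  have hQ1 : 0 < 2 * (ri ^ 2 + rj ^ 2 + 2 * ri * rj * Real.cos Φij)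
        * (ri ^ 2 + rk ^ 2 + 2 * ri * rk * Real.cos Φik)
      + 2 * (ri ^ 2 + rk ^ 2 + 2 * ri * rk * Real.cos Φik)
        * (rj ^ 2 + rk ^ 2 + 2 * rj * rk * Real.cos Φjk)
      + 2 * (ri ^ 2 + rj ^ 2 + 2 * ri * rj * Real.cos Φij)
        * (rj ^ 2 + rk ^ 2 + 2 * rj * rk * Real.cos Φjk)
      - (ri ^ 2 + rj ^ 2 + 2 * ri * rj * Real.cos Φij) ^ 2
      - (ri ^ 2 + rk ^ 2 + 2 * ri * rk * Real.cos Φik) ^ 2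
      - (rj ^ 2 + rk ^ 2 + 2 * rj * rk * Real.cos Φjk) ^ 2 :=
    Qpos hA2 hB2 hC2 (by linarith) (by linarith) (by linarith) (by linarith)
  have hQ2 : 0 < 2 * (ri ^ 2 + rj ^ 2 + 2 * ri * rj * Real.cos Φij)
        * (rj ^ 2 + rk ^ 2 + 2 * rj * rk * Real.cos Φjk)
      + 2 * (rj ^ 2 + rk ^ 2 + 2 * rj * rk * Real.cos Φjk)
        * (ri ^ 2 + rk ^ 2 + 2 * ri * rk * Real.cos Φik)
      + 2 * (ri ^ 2 + rj ^ 2 + 2 * ri * rj * Real.cos Φij)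
        * (ri ^ 2 + rk ^ 2 + 2 * ri * rk * Real.cos Φik)
      - (ri ^ 2 + rj ^ 2 + 2 * ri * rj * Real.cos Φij) ^ 2
      - (rj ^ 2 + rk ^ 2 + 2 * rj * rk * Real.cos Φjk) ^ 2
      - (ri ^ 2 + rk ^ 2 + 2 * ri * rk * Real.cos Φik) ^ 2 :=
    Qpos hA2 hC2 hB2 (by linarith) (by linarith) (by linarith) (by linarith)
  -- derivatives of the polynomial squared lengths
  have hsq : ∀ x : ℝ, HasDerivAt (fun y : ℝ => y ^ 2) (2 * x) x := fun x => by
    simpa using hasDerivAt_pow 2 x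
  have hlin : ∀ (k x : ℝ), HasDerivAt (fun y : ℝ => k * y) k x := fun k x => by
    simpa using (hasDerivAt_id x).const_mul k
  have hp1 : HasDerivAt (fun y : ℝ => ri ^ 2 + y ^ 2 + 2 * ri * y * Real.cos Φij)
      (2 * rj + 2 * ri * Real.cos Φij) rj := by
    have h := ((hasDerivAt_const rj (ri ^ 2)).add (hsq rj)).add
      ((hlin (2 * ri) rj).mul_const (Real.cos Φij))
    exact h.congr_deriv (by ring)
  have hq1 : HasDerivAt (fun y : ℝ => y ^ 2 + rk ^ 2 + 2 * y * rk * Real.cos Φjk)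
      (2 * rj + 2 * rk * Real.cos Φjk) rj := by
    have h := ((hsq rj).add_const (rk ^ 2)).add
      (((hlin 2 rj).mul_const rk).mul_const (Real.cos Φjk))
    exact h
  have hp2 : HasDerivAt (fun y : ℝ => y ^ 2 + rj ^ 2 + 2 * y * rj * Real.cos Φij)
      (2 * ri + 2 * rj * Real.cos Φij) ri := by
    have h := ((hsq ri).add_const (rj ^ 2)).add
      (((hlin 2 ri).mul_const rj).mul_const (Real.cos Φij))
    exact h
  have hq2 : HasDerivAt (fun y : ℝ => y ^ 2 + rk ^ 2 + 2 * y * rk * Real.cos Φik)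
      (2 * ri + 2 * rk * Real.cos Φik) ri := by
    have h := ((hsq ri).add_const (rk ^ 2)).add
      (((hlin 2 ri).mul_const rk).mul_const (Real.cos Φik))
    exact h
  have hBpos : 0 < Real.sqrt (ri ^ 2 + rk ^ 2 + 2 * ri * rk * Real.cos Φik) :=
    Real.sqrt_pos.mpr hU
  have hCpos : 0 < Real.sqrt (rj ^ 2 + rk ^ 2 + 2 * rj * rk * Real.cos Φjk) :=
    Real.sqrt_pos.mpr hT
  -- the two derivative computations
  have hd1 : HasDerivAt (fun x => innerAngle (ell ri x Φij) (ell ri rk Φik) (ell x rk Φjk))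
      (-(1 / Real.sqrt (2 * (ri ^ 2 + rj ^ 2 + 2 * ri * rj * Real.cos Φij)
          * (ri ^ 2 + rk ^ 2 + 2 * ri * rk * Real.cos Φik)
        + 2 * (ri ^ 2 + rk ^ 2 + 2 * ri * rk * Real.cos Φik)
          * (rj ^ 2 + rk ^ 2 + 2 * rj * rk * Real.cos Φjk)
        + 2 * (ri ^ 2 + rj ^ 2 + 2 * ri * rj * Real.cos Φij)
          * (rj ^ 2 + rk ^ 2 + 2 * rj * rk * Real.cos Φjk)
        - (ri ^ 2 + rj ^ 2 + 2 * ri * rj * Real.cos Φij) ^ 2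
        - (ri ^ 2 + rk ^ 2 + 2 * ri * rk * Real.cos Φik) ^ 2
        - (rj ^ 2 + rk ^ 2 + 2 * rj * rk * Real.cos Φjk) ^ 2))
        * (((ri ^ 2 + rj ^ 2 + 2 * ri * rj * Real.cos Φij)
            - (ri ^ 2 + rk ^ 2 + 2 * ri * rk * Real.cos Φik)
            + (rj ^ 2 + rk ^ 2 + 2 * rj * rk * Real.cos Φjk))
          * (2 * rj + 2 * ri * Real.cos Φij)
          / (2 * (ri ^ 2 + rj ^ 2 + 2 * ri * rj * Real.cos Φij))
          - (2 * rj + 2 * rk * Real.cos Φjk))) rj := by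
    have h := key (b := Real.sqrt (ri ^ 2 + rk ^ 2 + 2 * ri * rk * Real.cos Φik))
      hp1 hq1 hS hT hBpos (by rw [hB4, hB2]; exact hQ1)
    rw [hB4, hB2] at h
    exact h
  have hd2 : HasDerivAt (fun x => innerAngle (ell x rj Φij) (ell rj rk Φjk) (ell x rk Φik))
      (-(1 / Real.sqrt (2 * (ri ^ 2 + rj ^ 2 + 2 * ri * rj * Real.cos Φij)
          * (rj ^ 2 + rk ^ 2 + 2 * rj * rk * Real.cos Φjk)
        + 2 * (rj ^ 2 + rk ^ 2 + 2 * rj * rk * Real.cos Φjk)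
          * (ri ^ 2 + rk ^ 2 + 2 * ri * rk * Real.cos Φik)
        + 2 * (ri ^ 2 + rj ^ 2 + 2 * ri * rj * Real.cos Φij)
          * (ri ^ 2 + rk ^ 2 + 2 * ri * rk * Real.cos Φik)
        - (ri ^ 2 + rj ^ 2 + 2 * ri * rj * Real.cos Φij) ^ 2
        - (rj ^ 2 + rk ^ 2 + 2 * rj * rk * Real.cos Φjk) ^ 2
        - (ri ^ 2 + rk ^ 2 + 2 * ri * rk * Real.cos Φik) ^ 2))
        * (((ri ^ 2 + rj ^ 2 + 2 * ri * rj * Real.cos Φij)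
            - (rj ^ 2 + rk ^ 2 + 2 * rj * rk * Real.cos Φjk)
            + (ri ^ 2 + rk ^ 2 + 2 * ri * rk * Real.cos Φik))
          * (2 * ri + 2 * rj * Real.cos Φij)
          / (2 * (ri ^ 2 + rj ^ 2 + 2 * ri * rj * Real.cos Φij))
          - (2 * ri + 2 * rk * Real.cos Φik))) ri := by
    have h := key (b := Real.sqrt (rj ^ 2 + rk ^ 2 + 2 * rj * rk * Real.cos Φjk))
      hp2 hq2 hS hU hCpos (by rw [hC4, hC2]; exact hQ2)
    rw [hC4, hC2] at h
    exact h
  rw [hd1.deriv, hd2.deriv]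
  rw [show 2 * (ri ^ 2 + rj ^ 2 + 2 * ri * rj * Real.cos Φij)
          * (rj ^ 2 + rk ^ 2 + 2 * rj * rk * Real.cos Φjk)
        + 2 * (rj ^ 2 + rk ^ 2 + 2 * rj * rk * Real.cos Φjk)
          * (ri ^ 2 + rk ^ 2 + 2 * ri * rk * Real.cos Φik)
        + 2 * (ri ^ 2 + rj ^ 2 + 2 * ri * rj * Real.cos Φij)
          * (ri ^ 2 + rk ^ 2 + 2 * ri * rk * Real.cos Φik)
        - (ri ^ 2 + rj ^ 2 + 2 * ri * rj * Real.cos Φij) ^ 2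
        - (rj ^ 2 + rk ^ 2 + 2 * rj * rk * Real.cos Φjk) ^ 2
        - (ri ^ 2 + rk ^ 2 + 2 * ri * rk * Real.cos Φik) ^ 2
      = 2 * (ri ^ 2 + rj ^ 2 + 2 * ri * rj * Real.cos Φij)
          * (ri ^ 2 + rk ^ 2 + 2 * ri * rk * Real.cos Φik)
        + 2 * (ri ^ 2 + rk ^ 2 + 2 * ri * rk * Real.cos Φik)
          * (rj ^ 2 + rk ^ 2 + 2 * rj * rk * Real.cos Φjk)
        + 2 * (ri ^ 2 + rj ^ 2 + 2 * ri * rj * Real.cos Φij)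
          * (rj ^ 2 + rk ^ 2 + 2 * rj * rk * Real.cos Φjk)
        - (ri ^ 2 + rj ^ 2 + 2 * ri * rj * Real.cos Φij) ^ 2
        - (ri ^ 2 + rk ^ 2 + 2 * ri * rk * Real.cos Φik) ^ 2
        - (rj ^ 2 + rk ^ 2 + 2 * rj * rk * Real.cos Φjk) ^ 2 from by ring]
  have hSQ : 0 < Real.sqrt (2 * (ri ^ 2 + rj ^ 2 + 2 * ri * rj * Real.cos Φij)
          * (ri ^ 2 + rk ^ 2 + 2 * ri * rk * Real.cos Φik)
        + 2 * (ri ^ 2 + rk ^ 2 + 2 * ri * rk * Real.cos Φik)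
          * (rj ^ 2 + rk ^ 2 + 2 * rj * rk * Real.cos Φjk)
        + 2 * (ri ^ 2 + rj ^ 2 + 2 * ri * rj * Real.cos Φij)
          * (rj ^ 2 + rk ^ 2 + 2 * rj * rk * Real.cos Φjk)
        - (ri ^ 2 + rj ^ 2 + 2 * ri * rj * Real.cos Φij) ^ 2
        - (ri ^ 2 + rk ^ 2 + 2 * ri * rk * Real.cos Φik) ^ 2
        - (rj ^ 2 + rk ^ 2 + 2 * rj * rk * Real.cos Φjk) ^ 2) := Real.sqrt_pos.mpr hQ1
  field_simp
  ring
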